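/- The function ρ(t) = -log(t + e^{-t} - 1) + log(1 - e^{-t}) is decreasing on (0, ∞). -/

import Mathlib

lemma aux_h_mono : StrictMonoOn (fun t : ℝ => t / (1 - Real.exp (-t))) (Set.Ioi 0) := by
  apply strictMonoOn_of_deriv_pos (convex_Ioi 0)
  · apply ContinuousOn.div continuousOn_id
    · fun_prop
    · intro t ht
      have : Real.exp (-t) < 1 := by
        rw [Real.exp_lt_one_iff]; simpa using ht
      exact ne_of_gt (by linarith)
  · intro t ht
    rw [interior_Ioi, Set.mem_Ioi] at ht
    have hB : 0 < 1 - Real.exp (-t) := by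
      have : Real.exp (-t) < 1 := by rw [Real.exp_lt_one_iff]; linarith
      linarith
    have hd : HasDerivAt (fun t : ℝ => t / (1 - Real.exp (-t)))
        ((1 * (1 - Real.exp (-t)) - t * Real.exp (-t)) / (1 - Real.exp (-t)) ^ 2) t := by
      have h1 : HasDerivAt (fun t : ℝ => (t : ℝ)) 1 t := hasDerivAt_id t
      have h2 : HasDerivAt (fun t : ℝ => 1 - Real.exp (-t)) (Real.exp (-t)) t := by
        have := (Real.hasDerivAt_exp (-t)).comp t (hasDerivAt_neg t)
        simpa using this.const_sub (1:ℝ)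
      exact h1.div h2 hB.ne'
    rw [hd.deriv]
    have key : (1 + t) * Real.exp (-t) < 1 := by
      have := Real.add_one_lt_exp (x := t) (by linarith)
      have hep : 0 < Real.exp (-t) := Real.exp_pos _
      have : (1 + t) * Real.exp (-t) < Real.exp t * Real.exp (-t) := by
        apply mul_lt_mul_of_pos_right _ hep; linarith
      rwa [← Real.exp_add, add_neg_cancel, Real.exp_zero] at this
    have : 0 < 1 * (1 - Real.exp (-t)) - t * Real.exp (-t) := by nlinarith
    positivity

/-- ρ(t) = -log(t + e^{-t} - 1) + log(1 - e^{-t}) is (strictly) decreasing on (0, ∞). -/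
theorem rho_strictAntiOn :
    StrictAntiOn
      (fun t : ℝ => -Real.log (t + Real.exp (-t) - 1) + Real.log (1 - Real.exp (-t)))
      (Set.Ioi 0) := by
  intro a ha b hb hab
  rw [Set.mem_Ioi] at ha hb
  have Ba : 0 < 1 - Real.exp (-a) := by
    have : Real.exp (-a) < 1 := by rw [Real.exp_lt_one_iff]; linarith
    linarith
  have Bb : 0 < 1 - Real.exp (-b) := by
    have : Real.exp (-b) < 1 := by rw [Real.exp_lt_one_iff]; linarith
    linarith
  have Aa : 0 < a + Real.exp (-a) - 1 := by
    have := Real.add_one_lt_exp (x := -a) (by linarith)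
    linarith
  have Ab : 0 < b + Real.exp (-b) - 1 := by
    have := Real.add_one_lt_exp (x := -b) (by linarith)
    linarith
  have hm := aux_h_mono (Set.mem_Ioi.mpr ha) (Set.mem_Ioi.mpr hb) hab
  simp only at hm
  rw [div_lt_div_iff₀ Ba Bb] at hm
  have key : (1 - Real.exp (-b)) * (a + Real.exp (-a) - 1) <
      (1 - Real.exp (-a)) * (b + Real.exp (-b) - 1) := by nlinarith
  have hlog := Real.log_lt_log (by positivity) key
  rw [Real.log_mul Bb.ne' Aa.ne', Real.log_mul Ba.ne' Ab.ne'] at hlog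
  simp only
  linarith
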